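/- If A is quasi-Eulerian with respect to c ∈ ℕ, then 𝔠(A) ≤ 2^c (n−c+1)(n−1). -/

import Mathlib

open Matrix

/-- The 0-1 transition matrix of a letter: `(p,q)`-entry is 1 iff `δ q a = p`. -/
def letterMat {n k : ℕ} (δ : Fin n → Fin k → Fin n) (a : Fin k) :
    Matrix (Fin n) (Fin n) ℝ :=
  fun p q => if δ q a = p then 1 else 0

/-- The matrix of a word, satisfying `[u][K] = [K·u]`. -/
def wordMat {n k : ℕ} (δ : Fin n → Fin k → Fin n) (w : List (Fin k)) :
    Matrix (Fin n) (Fin n) ℝ :=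
  (w.reverse.map (letterMat δ)).prod

/-- The action of a word on a state. -/
def act {n k : ℕ} (δ : Fin n → Fin k → Fin n) (w : List (Fin k)) (q : Fin n) : Fin n :=
  w.foldl δ q

/-- A word is a reset word if it maps all states to one state. -/
def IsReset {n k : ℕ} (δ : Fin n → Fin k → Fin n) (w : List (Fin k)) : Prop :=
  ∀ p q : Fin n, act δ w p = act δ w q

/-- `A` is quasi-Eulerian with respect to `c`: there is a set `E` of `n - c`
states with an entry state `s ∈ E` such that only `s` has incoming edges from
outside `E`, and for some positive probability vector `p`, the rows of
`S = Σ_a p(a)[a]` corresponding to states of `E \ {s}` are stochastic. -/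
def QuasiEulerian {n k : ℕ} (δ : Fin n → Fin k → Fin n) (c : ℕ) : Prop :=
  ∃ (E : Finset (Fin n)) (s : Fin n) (p : Fin k → ℝ),
    s ∈ E ∧ E.card = n - c ∧
    (∀ a, 0 < p a) ∧ (∑ a, p a = 1) ∧
    (∀ q a, δ q a ∈ E → δ q a ≠ s → q ∈ E) ∧
    (∀ i ∈ E, i ≠ s → ∑ j, (∑ a, p a • letterMat δ a) i j = 1)

namespace QEAux

open Finset

variable {n k : ℕ} (δ : Fin n → Fin k → Fin n)

@[simp] lemma act_nil (q : Fin n) : act δ [] q = q := rfl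
@[simp] lemma act_cons (a : Fin k) (w : List (Fin k)) (q : Fin n) :
    act δ (a :: w) q = act δ w (δ q a) := rfl
@[simp] lemma act_append (w w' : List (Fin k)) (q : Fin n) :
    act δ (w ++ w') q = act δ w' (act δ w q) := List.foldl_append ..
@[simp] lemma act_concat (w : List (Fin k)) (a : Fin k) (q : Fin n) :
    act δ (w.concat a) q = δ (act δ w q) a := by
  rw [List.concat_eq_append, act_append]; rfl
@[simp] lemma act_singleton (a : Fin k) (q : Fin n) : act δ [a] q = δ q a := rfl

/-- the averaged transition matrix, as a plain function -/
def Sm (p : Fin k → ℝ) : Fin n → Fin n → ℝ :=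
  fun i j => ∑ a, if δ j a = i then p a else 0

lemma smat_apply (p : Fin k → ℝ) (i j : Fin n) :
    (∑ a, p a • letterMat δ a) i j = Sm δ p i j := by
  simp [Sm, letterMat, Matrix.sum_apply, mul_ite]

lemma Sm_nonneg (p : Fin k → ℝ) (hp : ∀ a, 0 < p a) (i j : Fin n) : 0 ≤ Sm δ p i j := by
  refine Finset.sum_nonneg fun a _ => ?_
  split <;> simp [(hp a).le]

lemma Sm_colsum (p : Fin k → ℝ) (hp1 : ∑ a, p a = 1) (j : Fin n) :
    ∑ i, Sm δ p i j = 1 := by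
  simp only [Sm]
  rw [Finset.sum_comm]
  simpa [Finset.sum_ite_eq] using hp1

lemma Sm_pos_of (p : Fin k → ℝ) (hp : ∀ a, 0 < p a) {i j : Fin n} (a : Fin k)
    (h : δ j a = i) : 0 < Sm δ p i j := by
  have hle : p a ≤ Sm δ p i j := by
    have := Finset.single_le_sum (f := fun b => if δ j b = i then p b else 0)
      (fun b _ => by split <;> simp [(hp b).le]) (Finset.mem_univ a)
    simpa [h, Sm] using this
  exact lt_of_lt_of_le (hp a) hle

variable (α : Fin n → ℝ)

/-- weight of a finset -/
def Wt (T : Finset (Fin n)) : ℝ := ∑ q ∈ T, α q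

/-- preimage of a finset under the action of a word -/
def pre (w : List (Fin k)) (T : Finset (Fin n)) : Finset (Fin n) :=
  Finset.univ.filter (fun q => act δ w q ∈ T)

@[simp] lemma mem_pre {w : List (Fin k)} {T : Finset (Fin n)} {q : Fin n} :
    q ∈ pre δ w T ↔ act δ w q ∈ T := by simp [pre]

@[simp] lemma pre_nil (T : Finset (Fin n)) : pre δ [] T = T := by ext q; simp

lemma pre_cons (a : Fin k) (w : List (Fin k)) (T : Finset (Fin n)) :
    pre δ (a :: w) T = Finset.univ.filter (fun q => δ q a ∈ pre δ w T) := by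
  ext q; simp

lemma pre_append (w w' : List (Fin k)) (T : Finset (Fin n)) :
    pre δ (w ++ w') T = pre δ w (pre δ w' T) := by
  ext q; simp

/-- stationarity implies the averaging identity -/
lemma averaging (p : Fin k → ℝ)
    (hst : ∀ i, α i = ∑ j, Sm δ p i j * α j) (T : Finset (Fin n)) :
    Wt α T = ∑ a, p a * Wt α (pre δ [a] T) := by
  have h1 : Wt α T = ∑ j, (∑ i ∈ T, Sm δ p i j) * α j := by
    rw [Wt]
    calc ∑ i ∈ T, α i = ∑ i ∈ T, ∑ j, Sm δ p i j * α j := by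
          exact Finset.sum_congr rfl fun i _ => hst i
      _ = ∑ j, (∑ i ∈ T, Sm δ p i j) * α j := by
          rw [Finset.sum_comm]; simp [Finset.sum_mul]
  rw [h1]
  have h2 : ∀ j, (∑ i ∈ T, Sm δ p i j) * α j
      = ∑ a, p a * (if δ j a ∈ T then α j else 0) := by
    intro j
    have : (∑ i ∈ T, Sm δ p i j) = ∑ a, (if δ j a ∈ T then p a else 0) := by
      simp only [Sm]
      rw [Finset.sum_comm]
      refine Finset.sum_congr rfl fun a _ => ?_
      by_cases h : δ j a ∈ T
      · rw [if_pos h, Finset.sum_ite_eq, if_pos h]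
      · rw [if_neg h, Finset.sum_ite_eq, if_neg h]
    rw [this, Finset.sum_mul]
    refine Finset.sum_congr rfl fun a _ => ?_
    split <;> ring
  calc ∑ j, (∑ i ∈ T, Sm δ p i j) * α j
      = ∑ j, ∑ a, p a * (if δ j a ∈ T then α j else 0) := Finset.sum_congr rfl fun j _ => h2 j
    _ = ∑ a, p a * Wt α (pre δ [a] T) := by
        rw [Finset.sum_comm]
        refine Finset.sum_congr rfl fun a _ => ?_
        rw [Wt, ← Finset.mul_sum]
        rw [pre, Finset.sum_filter]
        simp
        left; exact Finset.sum_congr rfl fun _ _ => by congr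



section Stationary

variable {n k : ℕ}

open Filter Topology

lemma simplex_step (δ : Fin n → Fin k → Fin n) (p : Fin k → ℝ)
    (hp : ∀ a, 0 < p a) (hp1 : ∑ a, p a = 1)
    {x : Fin n → ℝ} (hx : x ∈ stdSimplex ℝ (Fin n)) :
    (fun i => ∑ j, Sm δ p i j * x j) ∈ stdSimplex ℝ (Fin n) := by
  constructor
  · intro i
    exact Finset.sum_nonneg fun j _ =>
      mul_nonneg (Sm_nonneg δ p hp i j) (hx.1 j)
  · rw [Finset.sum_comm]
    calc ∑ j, ∑ i, Sm δ p i j * x j = ∑ j : Fin n, x j := by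
          refine Finset.sum_congr rfl fun j _ => ?_
          rw [← Finset.sum_mul, Sm_colsum δ p hp1, one_mul]
      _ = 1 := hx.2

/-- Existence of a stationary distribution via Cesàro averages. -/
lemma exists_stationary (hn : 0 < n) (δ : Fin n → Fin k → Fin n) (p : Fin k → ℝ)
    (hp : ∀ a, 0 < p a) (hp1 : ∑ a, p a = 1) :
    ∃ α : Fin n → ℝ, (∀ i, 0 ≤ α i) ∧ (∑ i, α i = 1) ∧
      (∀ i, α i = ∑ j, Sm δ p i j * α j) := by
  classical
  -- iterates
  set step : (Fin n → ℝ) → (Fin n → ℝ) := fun x i => ∑ j, Sm δ p i j * x j with hstep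
  set x0 : Fin n → ℝ := fun _ => (n : ℝ)⁻¹ with hx0
  have hx0s : x0 ∈ stdSimplex ℝ (Fin n) := by
    constructor
    · intro i; positivity
    · simp [hx0, Finset.card_univ]
      rw [mul_inv_cancel₀]
      exact_mod_cast hn.ne'
  set y : ℕ → (Fin n → ℝ) := fun N => step^[N] x0 with hy
  have hys : ∀ N, y N ∈ stdSimplex ℝ (Fin n) := by
    intro N
    induction N with
    | zero => simpa [hy] using hx0s
    | succ N ih =>
      have : y (N+1) = step (y N) := by
        simp [hy, Function.iterate_succ_apply']
      rw [this]
      exact simplex_step δ p hp hp1 ih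
  have hysucc : ∀ N i, y (N+1) i = ∑ j, Sm δ p i j * y N j := by
    intro N i
    have : y (N+1) = step (y N) := by simp [hy, Function.iterate_succ_apply']
    rw [this]
  -- Cesàro averages
  set A : ℕ → (Fin n → ℝ) := fun N i => (N : ℝ)⁻¹ * ∑ m ∈ Finset.range N, y m i with hA
  have hAs : ∀ N : ℕ, A (N+1) ∈ stdSimplex ℝ (Fin n) := by
    intro N
    constructor
    · intro i
      apply mul_nonneg (by positivity)
      exact Finset.sum_nonneg fun m _ => (hys m).1 i
    · rw [hA]
      simp only
      rw [← Finset.mul_sum, Finset.sum_comm]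
      have : ∀ m ∈ Finset.range (N+1), ∑ i, y m i = 1 := fun m _ => (hys m).2
      rw [Finset.sum_congr rfl this]
      simp
      rw [inv_mul_cancel₀]
      positivity
  obtain ⟨α, hαs, φ, hφ, hconv⟩ :=
    (isCompact_stdSimplex ℝ (Fin n)).tendsto_subseq (x := fun N => A (N+1)) hAs
  refine ⟨α, hαs.1, hαs.2, ?_⟩
  intro i
  -- coordinatewise convergence
  have hcoord : ∀ j, Tendsto (fun m => A (φ m + 1) j) atTop (𝓝 (α j)) := by
    intro j
    have := hconv
    rw [tendsto_pi_nhds] at this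
    exact this j
  -- the exact identity
  have hkey : ∀ N : ℕ, A (N+1) i - ∑ j, Sm δ p i j * A (N+1) j
      = ((N:ℝ)+1)⁻¹ * (x0 i - y (N+1) i) := by
    intro N
    have h1 : ∑ j, Sm δ p i j * A (N+1) j
        = ((N:ℝ)+1)⁻¹ * ∑ m ∈ Finset.range (N+1), y (m+1) i := by
      simp only [hA]
      push_cast
      calc ∑ j, Sm δ p i j * (((N:ℝ)+1)⁻¹ * ∑ m ∈ Finset.range (N+1), y m j)
          = ((N:ℝ)+1)⁻¹ * ∑ j, Sm δ p i j * ∑ m ∈ Finset.range (N+1), y m j := by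
            rw [Finset.mul_sum]; refine Finset.sum_congr rfl fun j _ => by ring
        _ = ((N:ℝ)+1)⁻¹ * ∑ m ∈ Finset.range (N+1), ∑ j, Sm δ p i j * y m j := by
            congr 1
            rw [Finset.sum_comm]
            refine Finset.sum_congr rfl fun j _ => by rw [Finset.mul_sum]
        _ = ((N:ℝ)+1)⁻¹ * ∑ m ∈ Finset.range (N+1), y (m+1) i := by
            congr 1
            exact Finset.sum_congr rfl fun m _ => (hysucc m i).symm
    rw [h1, hA]
    simp only
    push_cast
    have htel : ∑ m ∈ Finset.range (N+1), y m i - ∑ m ∈ Finset.range (N+1), y (m+1) i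
        = x0 i - y (N+1) i := by
      have := Finset.sum_range_sub (fun m => y m i) (N+1)
      -- ∑ (y (m+1) i - y m i) = y (N+1) i - y 0 i
      have h2 : ∑ m ∈ Finset.range (N+1), (y (m+1) i - y m i) = y (N+1) i - y 0 i := this
      rw [Finset.sum_sub_distrib] at h2
      have : y 0 i = x0 i := by simp [hy]
      linarith [h2]
    rw [← mul_sub]
    rw [htel]
  -- bound and squeeze
  have hbound : ∀ N : ℕ, |A (N+1) i - ∑ j, Sm δ p i j * A (N+1) j| ≤ ((N:ℝ)+1)⁻¹ * 2 := by
    intro N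
    rw [hkey N, abs_mul]
    have h1 : |(((N:ℝ)+1))⁻¹| = ((N:ℝ)+1)⁻¹ := abs_of_pos (by positivity)
    rw [h1]
    apply mul_le_mul_of_nonneg_left _ (by positivity)
    have hx0b : 0 ≤ x0 i ∧ x0 i ≤ 1 := by
      constructor
      · exact hx0s.1 i
      · calc x0 i ≤ ∑ j, x0 j := Finset.single_le_sum (fun j _ => hx0s.1 j) (Finset.mem_univ i)
          _ = 1 := hx0s.2
    have hyb : 0 ≤ y (N+1) i ∧ y (N+1) i ≤ 1 := by
      constructor
      · exact (hys (N+1)).1 i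
      · calc y (N+1) i ≤ ∑ j, y (N+1) j :=
            Finset.single_le_sum (fun j _ => (hys (N+1)).1 j) (Finset.mem_univ i)
          _ = 1 := (hys (N+1)).2
    rw [abs_le]
    constructor <;> [linarith [hx0b.1, hx0b.2, hyb.1, hyb.2]; linarith [hx0b.1, hx0b.2, hyb.1, hyb.2]]
  -- limits
  have hlim1 : Tendsto (fun m => A (φ m + 1) i - ∑ j, Sm δ p i j * A (φ m + 1) j)
      atTop (𝓝 (α i - ∑ j, Sm δ p i j * α j)) := by
    apply Tendsto.sub (hcoord i)
    exact tendsto_finset_sum _ fun j _ => (hcoord j).const_mul _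
  have hlim2 : Tendsto (fun m => A (φ m + 1) i - ∑ j, Sm δ p i j * A (φ m + 1) j)
      atTop (𝓝 0) := by
    apply squeeze_zero_norm (fun m => hbound (φ m))
    have h1 : Tendsto (fun m : ℕ => ((φ m : ℝ) + 1)) atTop atTop := by
      apply Filter.tendsto_atTop_add_const_right
      exact tendsto_natCast_atTop_atTop.comp hφ.tendsto_atTop
    have := (h1.inv_tendsto_atTop).mul_const (2:ℝ)
    simpa using this
  have := tendsto_nhds_unique hlim1 hlim2
  linarith [this]

/-- positivity of stationary distribution under strong connectivity -/
lemma stationary_pos (δ : Fin n → Fin k → Fin n) (p : Fin k → ℝ)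
    (hp : ∀ a, 0 < p a)
    (hsc : ∀ s q : Fin n, ∃ w : List (Fin k), act δ w s = q)
    (α : Fin n → ℝ) (h0 : ∀ i, 0 ≤ α i) (h1 : ∑ i, α i = 1)
    (hst : ∀ i, α i = ∑ j, Sm δ p i j * α j) :
    ∀ i, 0 < α i := by
  have hex : ∃ i, 0 < α i := by
    by_contra h
    push_neg at h
    have : ∀ i, α i = 0 := fun i => le_antisymm (h i) (h0 i)
    simp [this] at h1
  obtain ⟨i0, hi0⟩ := hex
  have hstep : ∀ q a, 0 < α q → 0 < α (δ q a) := by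
    intro q a hq
    rw [hst (δ q a)]
    have h2 : Sm δ p (δ q a) q * α q ≤ ∑ j, Sm δ p (δ q a) j * α j :=
      Finset.single_le_sum (f := fun j => Sm δ p (δ q a) j * α j)
        (fun j _ => mul_nonneg (Sm_nonneg δ p hp _ j) (h0 j)) (Finset.mem_univ q)
    have h3 : 0 < Sm δ p (δ q a) q := Sm_pos_of δ p hp a rfl
    nlinarith
  intro i
  obtain ⟨w, hw⟩ := hsc i0 i
  subst hw
  induction w generalizing i0 with
  | nil => simpa using hi0
  | cons a w ih =>
    rw [act_cons]
    exact ih (δ i0 a) (hstep i0 a hi0)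

end Stationary


section Constancy

variable {n k : ℕ} (δ : Fin n → Fin k → Fin n) (p : Fin k → ℝ)
  (E : Finset (Fin n)) (s : Fin n) (α : Fin n → ℝ)

lemma prop_max (hp : ∀ a, 0 < p a)
    (hentry : ∀ q a, δ q a ∈ E → δ q a ≠ s → q ∈ E)
    (hrow : ∀ i ∈ E, i ≠ s → ∑ j, Sm δ p i j = 1)
    (hst : ∀ i, α i = ∑ j, Sm δ p i j * α j)
    (M : ℝ) (hM : ∀ j ∈ E, α j ≤ M)
    {i : Fin n} (hiE : i ∈ E) (his : i ≠ s) (hiM : α i = M)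
    {q : Fin n} {a : Fin k} (hqa : δ q a = i) :
    q ∈ E ∧ α q = M := by
  have hqE : q ∈ E := hentry q a (hqa ▸ hiE) (hqa ▸ his)
  refine ⟨hqE, ?_⟩
  have Szero : ∀ j, j ∉ E → Sm δ p i j = 0 := by
    intro j hj
    refine Finset.sum_eq_zero fun a' _ => ?_
    by_cases h : δ j a' = i
    · exact absurd (hentry j a' (h ▸ hiE) (h ▸ his)) hj
    · rw [if_neg h]
  have hres : ∑ j ∈ E, Sm δ p i j * α j = α i := by
    rw [hst i]
    exact Finset.sum_subset (Finset.subset_univ E)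
      (fun j _ hj => by rw [Szero j hj, zero_mul])
  have hres1 : ∑ j ∈ E, Sm δ p i j = 1 := by
    rw [← hrow i hiE his]
    exact Finset.sum_subset (Finset.subset_univ E) (fun j _ hj => Szero j hj)
  have hzero : ∑ j ∈ E, Sm δ p i j * (M - α j) = 0 := by
    have : ∑ j ∈ E, Sm δ p i j * (M - α j)
        = (∑ j ∈ E, Sm δ p i j) * M - ∑ j ∈ E, Sm δ p i j * α j := by
      rw [Finset.sum_mul, ← Finset.sum_sub_distrib]
      exact Finset.sum_congr rfl fun j _ => by ring
    rw [this, hres1, hres, one_mul, hiM, sub_self]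
  have hterm := (Finset.sum_eq_zero_iff_of_nonneg
    (fun j hj => mul_nonneg (Sm_nonneg δ p hp i j) (sub_nonneg.mpr (hM j hj)))).mp hzero
  have hq := hterm q hqE
  have hpos : 0 < Sm δ p i q := Sm_pos_of δ p hp a hqa
  have : M - α q = 0 := by
    rcases mul_eq_zero.mp hq with h | h
    · exact absurd h hpos.ne'
    · exact h
  linarith

lemma path_max (hp : ∀ a, 0 < p a)
    (hentry : ∀ q a, δ q a ∈ E → δ q a ≠ s → q ∈ E)
    (hrow : ∀ i ∈ E, i ≠ s → ∑ j, Sm δ p i j = 1)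
    (hst : ∀ i, α i = ∑ j, Sm δ p i j * α j)
    (M : ℝ) (hM : ∀ j ∈ E, α j ≤ M) :
    ∀ (w : List (Fin k)) (q i : Fin n), act δ w q = i → i ∈ E → i ≠ s → α i = M →
      (α s = M ∨ (q ∈ E ∧ α q = M)) := by
  intro w
  induction w with
  | nil =>
    intro q i hwq hiE his hiM
    right
    rw [show q = i from hwq]
    exact ⟨hiE, hiM⟩
  | cons a w ih =>
    intro q i hwq hiE his hiM
    rw [act_cons] at hwq
    rcases ih (δ q a) i hwq hiE his hiM with h | ⟨hE', hM'⟩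
    · exact Or.inl h
    · by_cases hs : δ q a = s
      · exact Or.inl (hs ▸ hM')
      · exact Or.inr (prop_max δ p E s α hp hentry hrow hst M hM hE' hs hM' rfl)

lemma le_alpha_s (hp : ∀ a, 0 < p a)
    (hsc : ∀ s q : Fin n, ∃ w : List (Fin k), act δ w s = q)
    (hentry : ∀ q a, δ q a ∈ E → δ q a ≠ s → q ∈ E)
    (hrow : ∀ i ∈ E, i ≠ s → ∑ j, Sm δ p i j = 1)
    (hst : ∀ i, α i = ∑ j, Sm δ p i j * α j)
    (hsE : s ∈ E) :
    ∀ j ∈ E, α j ≤ α s := by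
  obtain ⟨i0, hi0E, hi0⟩ := Finset.exists_max_image E α ⟨s, hsE⟩
  have hsM : α s = α i0 := by
    by_cases h : i0 = s
    · rw [h]
    · obtain ⟨w, hw⟩ := hsc s i0
      rcases path_max δ p E s α hp hentry hrow hst (α i0) hi0 w s i0 hw hi0E h rfl with
        h' | ⟨_, h'⟩ <;> exact h'
  intro j hj
  rw [hsM]
  exact hi0 j hj

lemma alpha_const_on_E (hp : ∀ a, 0 < p a)
    (hsc : ∀ s q : Fin n, ∃ w : List (Fin k), act δ w s = q)
    (hentry : ∀ q a, δ q a ∈ E → δ q a ≠ s → q ∈ E)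
    (hrow : ∀ i ∈ E, i ≠ s → ∑ j, Sm δ p i j = 1)
    (hst : ∀ i, α i = ∑ j, Sm δ p i j * α j)
    (hsE : s ∈ E) :
    ∀ i ∈ E, α i = α s := by
  intro i hi
  have h1 : α i ≤ α s := le_alpha_s δ p E s α hp hsc hentry hrow hst hsE i hi
  have hstneg : ∀ i, (fun j => -α j) i = ∑ j, Sm δ p i j * (fun j => -α j) j := by
    intro i
    simp only [mul_neg]
    rw [Finset.sum_neg_distrib, ← hst i]
  have h2 : -α i ≤ -α s :=
    le_alpha_s δ p E s (fun j => -α j) hp hsc hentry hrow hstneg hsE i hi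
  linarith

end Constancy


section Extension

variable {n k : ℕ} (δ : Fin n → Fin k → Fin n) (α : Fin n → ℝ)

/-- difference between the pushforward of `α` along a word and `α` itself -/
noncomputable def dvec (w : List (Fin k)) : Fin n → ℝ :=
  fun i => (∑ q ∈ Finset.univ.filter (fun q => act δ w q = i), α q) - α i

/-- the (transposed) letter action as a linear map -/
def Lmap (a : Fin k) : (Fin n → ℝ) →ₗ[ℝ] (Fin n → ℝ) where
  toFun v := fun i => ∑ j ∈ Finset.univ.filter (fun j => δ j a = i), v j
  map_add' u v := by
    funext i
    simp [Finset.sum_add_distrib]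
  map_smul' r v := by
    funext i
    simp [Finset.mul_sum]

lemma fiber_sum (w : List (Fin k)) (T : Finset (Fin n)) :
    ∑ i ∈ T, (∑ q ∈ Finset.univ.filter (fun q => act δ w q = i), α q)
      = Wt α (pre δ w T) := by
  have hmaps : ∀ q ∈ pre δ w T, act δ w q ∈ T := fun q hq => (mem_pre δ).mp hq
  have := Finset.sum_fiberwise_of_maps_to hmaps α
  rw [Wt, ← this]
  refine Finset.sum_congr rfl fun i hi => ?_
  congr 1
  ext q
  simp only [Finset.mem_filter, Finset.mem_univ, true_and, mem_pre]
  constructor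
  · intro h; exact ⟨h ▸ hi, h⟩
  · intro h; exact h.2

lemma sum_dvec_T (w : List (Fin k)) (T : Finset (Fin n)) :
    ∑ i ∈ T, dvec δ α w i = Wt α (pre δ w T) - Wt α T := by
  simp only [dvec]
  rw [Finset.sum_sub_distrib, fiber_sum]
  rfl

lemma pre_univ (w : List (Fin k)) : pre δ w (Finset.univ) = Finset.univ := by
  ext q; simp

lemma sum_dvec_univ (w : List (Fin k)) : ∑ i, dvec δ α w i = 0 := by
  have := sum_dvec_T δ α w Finset.univ
  rw [pre_univ] at this
  simpa using this

lemma dvec_concat (w : List (Fin k)) (a : Fin k) :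
    dvec δ α (w ++ [a]) = Lmap δ a (dvec δ α w) + dvec δ α [a] := by
  funext i
  have hact : ∀ q, act δ (w ++ [a]) q = δ (act δ w q) a := by
    intro q; rw [act_append, act_singleton]
  -- regroup the fiber of the long word
  have hmaps : ∀ q ∈ Finset.univ.filter (fun q => δ (act δ w q) a = i),
      act δ w q ∈ Finset.univ.filter (fun j => δ j a = i) := by
    intro q hq
    simp only [Finset.mem_filter, Finset.mem_univ, true_and] at hq ⊢
    exact hq
  have hgroup := Finset.sum_fiberwise_of_maps_to hmaps α
  have hinner : ∀ j ∈ Finset.univ.filter (fun j => δ j a = i),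
      (Finset.univ.filter (fun q => δ (act δ w q) a = i)).filter (fun q => act δ w q = j)
        = Finset.univ.filter (fun q => act δ w q = j) := by
    intro j hj
    simp only [Finset.mem_filter, Finset.mem_univ, true_and] at hj
    ext q
    simp only [Finset.filter_filter, Finset.mem_filter, Finset.mem_univ, true_and]
    constructor
    · intro h; exact h.2
    · intro h; exact ⟨h ▸ hj, h⟩
  have hA : ∑ j ∈ Finset.univ.filter (fun j => δ j a = i),
      (∑ q ∈ Finset.univ.filter (fun q => act δ w q = j), α q)
      = ∑ q ∈ Finset.univ.filter (fun q => δ (act δ w q) a = i), α q := by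
    rw [← hgroup]
    exact Finset.sum_congr rfl fun j hj => by rw [hinner j hj]
  simp only [dvec, Lmap, Pi.add_apply, LinearMap.coe_mk, AddHom.coe_mk]
  have hfil : Finset.univ.filter (fun q => act δ (w ++ [a]) q = i)
      = Finset.univ.filter (fun q => δ (act δ w q) a = i) := by
    ext q; simp [hact]
  have hfil2 : ∀ q : Fin n, act δ [a] q = δ q a := fun q => rfl
  rw [hfil]
  rw [← hA]
  rw [Finset.sum_sub_distrib]
  simp only [hfil2]
  ring

/-- span of the `dvec`s of words of length at most `t` -/
noncomputable def Vt (t : ℕ) : Submodule ℝ (Fin n → ℝ) :=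
  Submodule.span ℝ (dvec δ α '' {w : List (Fin k) | w.length ≤ t})

lemma mem_Vt {w : List (Fin k)} {t : ℕ} (h : w.length ≤ t) : dvec δ α w ∈ Vt δ α t :=
  Submodule.subset_span ⟨w, h, rfl⟩

lemma Vt_mono {t t' : ℕ} (h : t ≤ t') : Vt δ α t ≤ Vt δ α t' :=
  Submodule.span_mono (Set.image_mono fun w hw => le_trans hw h)

lemma Lmap_Vt (a : Fin k) (t : ℕ) :
    Submodule.map (Lmap δ a) (Vt δ α t) ≤ Vt δ α (t + 1) := by
  rw [Vt, Submodule.map_span]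
  rw [Submodule.span_le]
  rintro _ ⟨_, ⟨w, hw, rfl⟩, rfl⟩
  have heq : Lmap δ a (dvec δ α w) = dvec δ α (w ++ [a]) - dvec δ α [a] := by
    rw [dvec_concat]; abel
  rw [SetLike.mem_coe, heq]
  exact sub_mem (mem_Vt δ α (by simpa using Nat.add_le_add_right hw 1))
    (mem_Vt δ α (by simp))

lemma step_stab {t : ℕ} (h : Vt δ α (t + 1) ≤ Vt δ α t) :
    Vt δ α (t + 2) ≤ Vt δ α (t + 1) := by
  rw [Vt, Submodule.span_le]
  rintro _ ⟨w, hw, rfl⟩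
  simp only [Set.mem_setOf_eq] at hw
  rcases List.eq_nil_or_concat w with rfl | ⟨L, b, rfl⟩
  · exact mem_Vt δ α (by simp)
  · have hL : L.length ≤ t + 1 := by simpa using hw
    have h1 : dvec δ α L ∈ Vt δ α t := h (mem_Vt δ α hL)
    have h2 : Lmap δ b (dvec δ α L) ∈ Vt δ α (t + 1) :=
      Lmap_Vt δ α b t ⟨dvec δ α L, h1, rfl⟩
    rw [SetLike.mem_coe, List.concat_eq_append, dvec_concat]
    exact add_mem h2 (mem_Vt δ α (by simp))

lemma stab_all {t : ℕ} (h : Vt δ α (t + 1) ≤ Vt δ α t) :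
    ∀ u : ℕ, Vt δ α (t + u) ≤ Vt δ α t := by
  have haux : ∀ u : ℕ, Vt δ α (t + u + 1) ≤ Vt δ α (t + u) := by
    intro u
    induction u with
    | zero => exact h
    | succ u ih => exact step_stab δ α ih
  intro u
  induction u with
  | zero => exact le_rfl
  | succ u ih => exact le_trans (haux u) ih

/-- the sum functional -/
def sigmaFun : (Fin n → ℝ) →ₗ[ℝ] ℝ where
  toFun v := ∑ i, v i
  map_add' u v := by simp [Finset.sum_add_distrib]
  map_smul' r v := by simp [Finset.mul_sum]

lemma Vt_le_ker (t : ℕ) : Vt δ α t ≤ LinearMap.ker (sigmaFun (n := n)) := by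
  rw [Vt, Submodule.span_le]
  rintro _ ⟨w, _, rfl⟩
  rw [SetLike.mem_coe, LinearMap.mem_ker]
  exact sum_dvec_univ δ α w

lemma finrank_ker_sigma (hn : 1 ≤ n) :
    Module.finrank ℝ (LinearMap.ker (sigmaFun (n := n))) = n - 1 := by
  have hsurj : Function.Surjective (sigmaFun (n := n)) := by
    intro r
    refine ⟨fun _ => r / n, ?_⟩
    show ∑ _i : Fin n, r / n = r
    rw [Finset.sum_const, Finset.card_univ, Fintype.card_fin, nsmul_eq_mul]
    field_simp
  have hr : LinearMap.range (sigmaFun (n := n)) = ⊤ := LinearMap.range_eq_top.mpr hsurj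
  have := LinearMap.finrank_range_add_finrank_ker (sigmaFun (n := n))
  rw [hr, finrank_top, Module.finrank_self, Module.finrank_pi, Fintype.card_fin] at this
  omega

lemma exists_stab (hn : 1 ≤ n) :
    ∃ t ≤ n - 1, Vt δ α (t + 1) ≤ Vt δ α t := by
  by_contra hcon
  push_neg at hcon
  have hlt : ∀ t ≤ n - 1, Vt δ α t < Vt δ α (t + 1) := by
    intro t ht
    exact lt_of_le_not_ge (Vt_mono δ α (Nat.le_succ t)) (hcon t ht)
  have hrank : ∀ t ≤ n, t ≤ Module.finrank ℝ (Vt δ α t) := by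
    intro t
    induction t with
    | zero => intro; exact Nat.zero_le _
    | succ t ih =>
      intro ht
      have h1 := hlt t (by omega)
      have h2 := Submodule.finrank_lt_finrank_of_lt h1
      have h3 := ih (by omega)
      omega
  have h4 := hrank n le_rfl
  have h5 : Module.finrank ℝ (Vt δ α n) ≤ n - 1 := by
    rw [← finrank_ker_sigma (n := n) hn]
    exact Submodule.finrank_mono (Vt_le_ker δ α n)
  omega

lemma dvec_mem_stab (hn : 1 ≤ n) (w : List (Fin k)) :
    ∃ t ≤ n - 1, dvec δ α w ∈ Vt δ α t ∧ Vt δ α t ≤ Vt δ α (n-1) := by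
  obtain ⟨t, ht, hstab⟩ := exists_stab δ α hn
  refine ⟨t, ht, ?_, Vt_mono δ α ht⟩
  have h1 : dvec δ α w ∈ Vt δ α (t + w.length) := mem_Vt δ α (by omega)
  exact stab_all δ α hstab w.length h1

/-- The extension lemma: any proper subset's weight can be strictly increased
by taking the preimage under a word of length at most `n-1`. -/
lemma extension (hn : 1 ≤ n)
    (p : Fin k → ℝ) (hp : ∀ a, 0 < p a) (hp1 : ∑ a, p a = 1)
    (hsc : ∀ s q : Fin n, ∃ w : List (Fin k), act δ w s = q)
    (w0 : List (Fin k)) (hw0 : ∀ p q : Fin n, act δ w0 p = act δ w0 q)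
    (hst : ∀ i, α i = ∑ j, Sm δ p i j * α j)
    (h1 : ∑ i, α i = 1)
    (T : Finset (Fin n)) (hT : T.Nonempty) (hTlt : Wt α T < 1) :
    ∃ u : List (Fin k), u.length ≤ n - 1 ∧ Wt α T < Wt α (pre δ u T) := by
  by_contra hcon
  push_neg at hcon
  -- all short words give equal weight
  have heq : ∀ u : List (Fin k), u.length ≤ n - 1 → Wt α (pre δ u T) = Wt α T := by
    intro u
    induction u with
    | nil => intro; rw [pre_nil]
    | cons a w ih =>
      intro hlen
      have hwlen : w.length ≤ n - 1 := by simp at hlen; omega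
      have hIH := ih hwlen
      have havg := averaging δ α p hst (pre δ w T)
      have hexp : ∀ b : Fin k, pre δ [b] (pre δ w T) = pre δ (b :: w) T := by
        intro b
        rw [← pre_append]
        rfl
      have havg' : ∑ b, p b * Wt α (pre δ (b :: w) T) = Wt α T := by
        rw [← hIH, havg]
        exact Finset.sum_congr rfl fun b _ => by rw [hexp b]
      have hterm0 : ∑ b, p b * (Wt α T - Wt α (pre δ (b :: w) T)) = 0 := by
        have hrw : ∑ b, p b * (Wt α T - Wt α (pre δ (b :: w) T))
            = (∑ b, p b) * Wt α T - ∑ b, p b * Wt α (pre δ (b :: w) T) := by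
          rw [Finset.sum_mul, ← Finset.sum_sub_distrib]
          exact Finset.sum_congr rfl fun b _ => by ring
        rw [hrw, hp1, one_mul, havg', sub_self]
      have hnn : ∀ b : Fin k, b ∈ Finset.univ →
          0 ≤ p b * (Wt α T - Wt α (pre δ (b :: w) T)) := by
        intro b _
        apply mul_nonneg (hp b).le
        have := hcon (b :: w)
          (by simp only [List.length_cons] at hlen ⊢; omega)
        linarith
      have := (Finset.sum_eq_zero_iff_of_nonneg hnn).mp hterm0 a (Finset.mem_univ a)
      have hpa := hp a
      have : Wt α T - Wt α (pre δ (a :: w) T) = 0 := by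
        rcases mul_eq_zero.mp this with h | h
        · exact absurd h hpa.ne'
        · exact h
      linarith
  -- the weight functional vanishes on all short dvecs, hence on all dvecs
  have hzero : ∀ u : List (Fin k), u.length ≤ n - 1 → ∑ i ∈ T, dvec δ α u i = 0 := by
    intro u hu
    rw [sum_dvec_T, heq u hu, sub_self]
  set φT : (Fin n → ℝ) →ₗ[ℝ] ℝ :=
    { toFun := fun v => ∑ i ∈ T, v i
      map_add' := fun u v => by simp [Finset.sum_add_distrib]
      map_smul' := fun r v => by simp [Finset.mul_sum] } with hφT
  have hker : Vt δ α (n - 1) ≤ LinearMap.ker φT := by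
    rw [Vt, Submodule.span_le]
    rintro _ ⟨u, hu, rfl⟩
    rw [SetLike.mem_coe, LinearMap.mem_ker]
    exact hzero u hu
  have hall : ∀ u : List (Fin k), Wt α (pre δ u T) = Wt α T := by
    intro u
    obtain ⟨t, _, hmem, hle⟩ := dvec_mem_stab δ α hn u
    have h0 : φT (dvec δ α u) = 0 := hker (hle hmem)
    have h0' : ∑ i ∈ T, dvec δ α u i = 0 := h0
    rw [sum_dvec_T] at h0'
    linarith
  obtain ⟨q1, hq1⟩ := hT
  obtain ⟨v, hv⟩ := hsc (act δ w0 ⟨0, hn⟩) q1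
  have hpreuniv : pre δ (w0 ++ v) T = Finset.univ := by
    ext q
    simp only [mem_pre, act_append, Finset.mem_univ, iff_true]
    rw [hw0 q ⟨0, hn⟩, hv]
    exact hq1
  have hfin := hall (w0 ++ v)
  rw [hpreuniv] at hfin
  have huniv : Wt α (Finset.univ : Finset (Fin n)) = 1 := h1
  linarith

end Extension


section MainInduction

variable {n k : ℕ} (δ : Fin n → Fin k → Fin n) (α : Fin n → ℝ)

lemma Wt_univ_eq (h1 : ∑ i, α i = 1) : Wt α (Finset.univ : Finset (Fin n)) = 1 := h1

lemma Wt_lt_one (hpos : ∀ i, 0 < α i) (h1 : ∑ i, α i = 1)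
    {T : Finset (Fin n)} (hT : T ≠ Finset.univ) : Wt α T < 1 := by
  have hsub : T ⊆ Finset.univ := Finset.subset_univ T
  have hsdiff := Finset.sum_sdiff (f := α) hsub
  have hne : (Finset.univ \ T).Nonempty := by
    rw [Finset.sdiff_nonempty]
    intro h
    exact hT (le_antisymm hsub h)
  have hpos' : 0 < ∑ q ∈ Finset.univ \ T, α q :=
    Finset.sum_pos (fun q _ => hpos q) hne
  have hW : Wt α T = ∑ i ∈ T, α i := rfl
  linarith [hsdiff, h1]

lemma Wt_pos (hpos : ∀ i, 0 < α i) {T : Finset (Fin n)} (hT : T.Nonempty) :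
    0 < Wt α T := Finset.sum_pos (fun q _ => hpos q) hT

lemma main_ind (hpos : ∀ i, 0 < α i) (h1 : ∑ i, α i = 1)
    (𝒱 : Finset ℝ) (hV : ∀ T : Finset (Fin n), Wt α T ∈ 𝒱)
    (hext : ∀ T : Finset (Fin n), T.Nonempty → Wt α T < 1 →
      ∃ u : List (Fin k), u.length ≤ n - 1 ∧ Wt α T < Wt α (pre δ u T)) :
    ∀ (m : ℕ) (T : Finset (Fin n)), T.Nonempty →
      (𝒱.filter (fun v => Wt α T < v)).card ≤ m →
      ∃ w : List (Fin k), (∀ q, act δ w q ∈ T) ∧ w.length ≤ m * (n - 1) := by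
  intro m
  induction m with
  | zero =>
    intro T hTne hcard
    have hTuniv : T = Finset.univ := by
      by_contra hne
      have hlt := Wt_lt_one α hpos h1 hne
      have h1mem : (1:ℝ) ∈ 𝒱.filter (fun v => Wt α T < v) := by
        rw [Finset.mem_filter]
        exact ⟨Wt_univ_eq α h1 ▸ hV Finset.univ, hlt⟩
      have := Finset.card_pos.mpr ⟨1, h1mem⟩
      omega
    exact ⟨[], fun q => by simp [hTuniv], by simp⟩
  | succ m ih =>
    intro T hTne hcard
    by_cases hTuniv : T = Finset.univ
    · exact ⟨[], fun q => by simp [hTuniv], by simp⟩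
    · have hlt := Wt_lt_one α hpos h1 hTuniv
      obtain ⟨u, hulen, hincr⟩ := hext T hTne hlt
      set T' := pre δ u T with hT'
      have hT'ne : T'.Nonempty := by
        rw [Finset.nonempty_iff_ne_empty]
        intro h
        have h0 := Wt_pos α hpos hTne
        rw [h] at hincr
        have : Wt α (∅ : Finset (Fin n)) = 0 := Finset.sum_empty
        rw [this] at hincr
        linarith
      have hsubset : 𝒱.filter (fun v => Wt α T' < v)
          ⊆ (𝒱.filter (fun v => Wt α T < v)).erase (Wt α T') := by
        intro v hv
        rw [Finset.mem_filter] at hv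
        rw [Finset.mem_erase, Finset.mem_filter]
        exact ⟨ne_of_gt hv.2, hv.1, lt_trans hincr hv.2⟩
      have hmemT' : Wt α T' ∈ 𝒱.filter (fun v => Wt α T < v) := by
        rw [Finset.mem_filter]
        exact ⟨hV T', hincr⟩
      have hcard' : (𝒱.filter (fun v => Wt α T' < v)).card ≤ m := by
        have h2 := Finset.card_le_card hsubset
        rw [Finset.card_erase_of_mem hmemT'] at h2
        omega
      obtain ⟨w', hw', hw'len⟩ := ih T' hT'ne hcard'
      refine ⟨w' ++ u, ?_, ?_⟩
      · intro q
        have := hw' q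
        rw [hT', mem_pre] at this
        rw [act_append]
        exact this
      · rw [List.length_append]
        calc w'.length + u.length ≤ m * (n-1) + (n-1) := Nat.add_le_add hw'len hulen
          _ = (m+1) * (n-1) := by ring
end MainInduction
end QEAux

open QEAux


open QEAux

/-- If `A` is quasi-Eulerian with respect to `c`, then the reset length is at
most `2^c (n-c+1)(n-1)`. -/
theorem stmt11 {n k : ℕ} (hn : 2 ≤ n) (δ : Fin n → Fin k → Fin n)
    (hsc : ∀ s q : Fin n, ∃ w : List (Fin k), act δ w s = q)
    (hsync : ∃ w, IsReset δ w)
    (c : ℕ) (hqe : QuasiEulerian δ c)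
    (r : ℕ)
    (hr : IsLeast {t : ℕ | ∃ w : List (Fin k), IsReset δ w ∧ w.length = t} r) :
    r ≤ 2 ^ c * (n - c + 1) * (n - 1) := by
  classical
  obtain ⟨E, s, p, hsE, hcard, hp, hp1, hentry, hrowM⟩ := hqe
  -- c < n
  have hcn : c < n := by
    by_contra h
    push_neg at h
    have : E.card = 0 := by omega
    rw [Finset.card_eq_zero] at this
    rw [this] at hsE
    exact absurd hsE (Finset.notMem_empty s)
  have hn1 : 1 ≤ n := by omega
  -- row sums in terms of Sm
  have hrow : ∀ i ∈ E, i ≠ s → ∑ j, Sm δ p i j = 1 := by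
    intro i hi his
    have := hrowM i hi his
    rw [← this]
    exact Finset.sum_congr rfl fun j _ => (smat_apply δ p i j).symm
  -- stationary distribution
  obtain ⟨α, h0, h1, hst⟩ := exists_stationary (by omega) δ p hp hp1
  have hpos : ∀ i, 0 < α i := stationary_pos δ p hp hsc α h0 h1 hst
  have hconst : ∀ i ∈ E, α i = α s := alpha_const_on_E δ p E s α hp hsc hentry hrow hst hsE
  -- the value set
  set 𝒱 : Finset ℝ :=
    ((Finset.range (n - c + 1)) ×ˢ Eᶜ.powerset).image
      (fun pr => (pr.1 : ℝ) * α s + ∑ q ∈ pr.2, α q) with h𝒱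
  have hV : ∀ T : Finset (Fin n), Wt α T ∈ 𝒱 := by
    intro T
    rw [h𝒱, Finset.mem_image]
    refine ⟨((T ∩ E).card, T \ E), ?_, ?_⟩
    · rw [Finset.mem_product]
      constructor
      · rw [Finset.mem_range]
        have : (T ∩ E).card ≤ E.card := Finset.card_le_card Finset.inter_subset_right
        omega
      · rw [Finset.mem_powerset]
        intro q hq
        rw [Finset.mem_sdiff] at hq
        rw [Finset.mem_compl]
        exact hq.2
    · have hsplit := Finset.sum_inter_add_sum_sdiff T E α
      have hconstsum : ∑ q ∈ T ∩ E, α q = ((T ∩ E).card : ℝ) * α s := by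
        rw [Finset.sum_congr rfl
          (fun q hq => hconst q (Finset.mem_of_mem_inter_right hq))]
        rw [Finset.sum_const, nsmul_eq_mul]
      rw [Wt, ← hsplit, hconstsum]
  have hVcard : 𝒱.card ≤ (n - c + 1) * 2 ^ c := by
    have h2 : Eᶜ.card = c := by
      have := Finset.card_compl E
      rw [hcard] at this
      simp only [Fintype.card_fin] at this
      omega
    calc 𝒱.card ≤ ((Finset.range (n - c + 1)) ×ˢ Eᶜ.powerset).card :=
          Finset.card_image_le
      _ = (n - c + 1) * 2 ^ c := by
          rw [Finset.card_product, Finset.card_range, Finset.card_powerset, h2]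
  -- extension property
  obtain ⟨w0, hw0⟩ := hsync
  have hext : ∀ T : Finset (Fin n), T.Nonempty → Wt α T < 1 →
      ∃ u : List (Fin k), u.length ≤ n - 1 ∧ Wt α T < Wt α (pre δ u T) :=
    fun T hTne hTlt => extension δ α hn1 p hp hp1 hsc w0 hw0 hst h1 T hTne hTlt
  -- apply the main induction with T = {s}
  have hcard0 : (𝒱.filter (fun v => Wt α {s} < v)).card ≤ (n - c + 1) * 2 ^ c - 1 := by
    have hsubset : 𝒱.filter (fun v => Wt α {s} < v) ⊆ 𝒱.erase (Wt α {s}) := by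
      intro v hv
      rw [Finset.mem_filter] at hv
      rw [Finset.mem_erase]
      exact ⟨ne_of_gt hv.2, hv.1⟩
    have h2 := Finset.card_le_card hsubset
    rw [Finset.card_erase_of_mem (hV {s})] at h2
    omega
  obtain ⟨w, hwT, hwlen⟩ := main_ind δ α hpos h1 𝒱 hV hext
    ((n - c + 1) * 2 ^ c - 1) {s} (Finset.singleton_nonempty s) hcard0
  have hreset : IsReset δ w := by
    intro a b
    have ha := hwT a
    have hb := hwT b
    rw [Finset.mem_singleton] at ha hb
    rw [ha, hb]
  have hrle : r ≤ w.length := hr.2 ⟨w, hreset, rfl⟩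
  calc r ≤ w.length := hrle
    _ ≤ ((n - c + 1) * 2 ^ c - 1) * (n - 1) := hwlen
    _ ≤ 2 ^ c * (n - c + 1) * (n - 1) := by
        apply Nat.mul_le_mul_right
        calc (n - c + 1) * 2 ^ c - 1 ≤ (n - c + 1) * 2 ^ c := Nat.sub_le _ _
          _ = 2 ^ c * (n - c + 1) := Nat.mul_comm _ _
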